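/- Let (U, A) be a left bialgebroid which is left Hopf. Then the monoidal category U-Mod of left U-modules is right closed: for left U-modules N, M, the k-module hom^r(N,M) := Hom_{A^op}(N,M) of right A-linear maps, equipped with the left U-action (u · g)(n) := u₊ g(u₋ n), is a left U-module, and the Hom-tensor adjunction ξ: Hom_U(P ⊗_A N, M) ≅ Hom_U(P, hom^r(N,M)), ξ(g)(p) = g(p ⊗ -), is a natural isomorphism exhibiting hom^r(N,-) as right adjoint to - ⊗_A N. Consequently U-Mod is biclosed monoidal. -/

import Mathlib

open scoped TensorProduct
open TensorProduct

noncomputable section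

variable (k A U : Type) [CommRing k] [Ring A] [Ring U] [Algebra k A] [Algebra k U]

/-- The `k`-submodule of `N ⊗[k] M` of relations defining the `A`-module tensor
product `N ⊗_A M` of two left `U`-modules, where the right `A`-action on `N` is
`n ◃ a := t a • n` and the left `A`-action on `M` is `a ▹ m := s a • m`
(the `A`-bimodule structure `a ▹ m ◃ b = s a • t b • m` induced by the forgetful
functor along the source and target maps `s`, `t`). -/
def relA (s t : A → U) (N M : Type) [AddCommGroup N] [Module k N] [Module U N]
    [AddCommGroup M] [Module k M] [Module U M] : Submodule k (N ⊗[k] M) :=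
  Submodule.span k
    {z | ∃ (a : A) (n : N) (m : M), z = (t a • n) ⊗ₜ[k] m - n ⊗ₜ[k] (s a • m)}

/-- Relations defining `U ⊗_{Aᵒᵖ} U` (the source of the Hopf–Galois map `α_ℓ`):
`(u * t a) ⊗ v - u ⊗ (t a * v)`. -/
def relOp (t : A → U) : Submodule k (U ⊗[k] U) :=
  Submodule.span k
    {z | ∃ (a : A) (u v : U), z = (u * t a) ⊗ₜ[k] v - u ⊗ₜ[k] (t a * v)}

/-- Relations defining the triple tensor product `U ⊗_A U ⊗_A U` inside
`U ⊗[k] (U ⊗[k] U)`. -/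
def rel3 (s t : A → U) : Submodule k (U ⊗[k] (U ⊗[k] U)) :=
  Submodule.span k
    ({z | ∃ (a : A) (u v w : U),
        z = (t a * u) ⊗ₜ[k] (v ⊗ₜ[k] w) - u ⊗ₜ[k] ((s a * v) ⊗ₜ[k] w)} ∪
     {z | ∃ (a : A) (u v w : U),
        z = u ⊗ₜ[k] ((t a * v) ⊗ₜ[k] w) - u ⊗ₜ[k] (v ⊗ₜ[k] (s a * w))})

/-- A left bialgebroid `(U, A)` over a commutative ring `k`, presented with a
set-theoretic lift `comul : U → U ⊗[k] U` of the coproduct `Δ : U → U ⊗_A U`;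
all structure equations involving `Δ` are stated modulo the relation submodule
`relA`, resp. on arbitrary finite decompositions into elementary tensors
(= Sweedler components). -/
structure LeftBialgebroid : Type 1 where
  /-- the source map, an algebra map `A → U` -/
  s : A →ₐ[k] U
  /-- the target map, an algebra anti-homomorphism `A → U` -/
  t : A →ₗ[k] U
  t_one : t 1 = 1
  t_mul : ∀ a b : A, t (a * b) = t b * t a
  st_comm : ∀ a b : A, s a * t b = t b * s a
  /-- the counit -/
  counit : U →ₗ[k] A
  /-- a lift of the coproduct -/
  comul : U → U ⊗[k] U
  comul_add : ∀ u v : U, comul (u + v) - comul u - comul v ∈ relA k A U s t U U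
  comul_ksmul : ∀ (c : k) (u : U), comul (c • u) - c • comul u ∈ relA k A U s t U U
  comul_one : comul 1 - (1 : U) ⊗ₜ[k] (1 : U) ∈ relA k A U s t U U
  comul_s : ∀ a : A, comul (s a) - (s a) ⊗ₜ[k] (1 : U) ∈ relA k A U s t U U
  comul_t : ∀ a : A, comul (t a) - (1 : U) ⊗ₜ[k] (t a) ∈ relA k A U s t U U
  comul_mul : ∀ u v : U, comul (u * v) - comul u * comul v ∈ relA k A U s t U U
  /-- The coproduct takes values in the Takeuchi product `U ×_A U`. -/
  takeuchi : ∀ (u : U) (a : A),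
    TensorProduct.map (LinearMap.mulRight k (t a)) LinearMap.id (comul u) -
      TensorProduct.map LinearMap.id (LinearMap.mulRight k (s a)) (comul u)
      ∈ relA k A U s t U U
  counit_one : counit 1 = 1
  counit_s : ∀ a : A, counit (s a) = a
  counit_t : ∀ a : A, counit (t a) = a
  counit_sl : ∀ (a : A) (u : U), counit (s a * u) = a * counit u
  counit_tl : ∀ (a : A) (u : U), counit (t a * u) = counit u * a
  /-- left counitality: `s (ε u₍₁₎) u₍₂₎ = u` -/
  counit_comul_left : ∀ (u : U) {κ : Type} [Fintype κ] (x y : κ → U),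
    comul u - ∑ j, x j ⊗ₜ[k] y j ∈ relA k A U s t U U →
      ∑ j, s (counit (x j)) * y j = u
  /-- right counitality: `t (ε u₍₂₎) u₍₁₎ = u` -/
  counit_comul_right : ∀ (u : U) {κ : Type} [Fintype κ] (x y : κ → U),
    comul u - ∑ j, x j ⊗ₜ[k] y j ∈ relA k A U s t U U →
      ∑ j, t (counit (y j)) * x j = u
  /-- coassociativity: `u₍₁₎₍₁₎ ⊗ u₍₁₎₍₂₎ ⊗ u₍₂₎ = u₍₁₎ ⊗ u₍₂₎₍₁₎ ⊗ u₍₂₎₍₂₎` -/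
  coassoc : ∀ (u : U) {κ : Type} [Fintype κ] (x y : κ → U)
      {κ' : Type} [Fintype κ'] (x₁ y₁ : κ → κ' → U) (x₂ y₂ : κ → κ' → U),
    comul u - ∑ j, x j ⊗ₜ[k] y j ∈ relA k A U s t U U →
    (∀ j, comul (x j) - ∑ l, x₁ j l ⊗ₜ[k] y₁ j l ∈ relA k A U s t U U) →
    (∀ j, comul (y j) - ∑ l, x₂ j l ⊗ₜ[k] y₂ j l ∈ relA k A U s t U U) →
    (∑ j, ∑ l, x₁ j l ⊗ₜ[k] (y₁ j l ⊗ₜ[k] y j)) -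
      (∑ j, ∑ l, x j ⊗ₜ[k] (x₂ j l ⊗ₜ[k] y₂ j l)) ∈ rel3 k A U s t

/-- A left Hopf structure on a left bialgebroid: the translation map
`u ↦ u₊ ⊗ u₋` (a set-theoretic lift of `α_ℓ⁻¹(u ⊗ 1)`), linear modulo the
`⊗_{Aᵒᵖ}`-relations and satisfying the two identities characterizing the
inverse of the Hopf-Galois map `α_ℓ : u ⊗ v ↦ u₍₁₎ ⊗ u₍₂₎v`, namely
`u₊₍₁₎ ⊗ u₊₍₂₎ u₋ = u ⊗ 1` in `U ⊗_A U` and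
`u₍₁₎₊ ⊗ u₍₁₎₋ u₍₂₎ = u ⊗ 1` in `U ⊗_{Aᵒᵖ} U`; this data is equivalent to the
bijectivity of `α_ℓ`, i.e. to `(U, A)` being a left Hopf algebroid. -/
structure LeftHopf (lb : LeftBialgebroid k A U) : Type where
  pinv : U → U ⊗[k] U
  pinv_add : ∀ u v : U, pinv (u + v) - pinv u - pinv v ∈ relOp k A U lb.t
  pinv_ksmul : ∀ (c : k) (u : U), pinv (c • u) - c • pinv u ∈ relOp k A U lb.t
  sch2 : ∀ (u : U) {κ : Type} [Fintype κ] (x y : κ → U)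
      {κ' : Type} [Fintype κ'] (p q : κ → κ' → U),
    pinv u - ∑ j, x j ⊗ₜ[k] y j ∈ relOp k A U lb.t →
    (∀ j, lb.comul (x j) - ∑ l, p j l ⊗ₜ[k] q j l ∈ relA k A U lb.s lb.t U U) →
    (∑ j, ∑ l, p j l ⊗ₜ[k] (q j l * y j)) - u ⊗ₜ[k] (1 : U)
      ∈ relA k A U lb.s lb.t U U
  sch3 : ∀ (u : U) {κ : Type} [Fintype κ] (x y : κ → U)
      {κ' : Type} [Fintype κ'] (p q : κ → κ' → U),
    lb.comul u - ∑ j, x j ⊗ₜ[k] y j ∈ relA k A U lb.s lb.t U U →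
    (∀ j, pinv (x j) - ∑ l, p j l ⊗ₜ[k] q j l ∈ relOp k A U lb.t) →
    (∑ j, ∑ l, p j l ⊗ₜ[k] (q j l * y j)) - u ⊗ₜ[k] (1 : U)
      ∈ relOp k A U lb.t

variable {k A U}

/-- the `k`-linear map `u ↦ u • n` for a fixed element of a `U`-module -/
def actOn (N : Type) [AddCommGroup N] [Module k N] [Module U N]
    [IsScalarTower k U N] (n : N) : U →ₗ[k] N where
  toFun u := u • n
  map_add' u v := add_smul u v n
  map_smul' c u := smul_assoc c u n

/-- A `k`-linear map `g : N →ₗ[k] M` between left `U`-modules is right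
`A`-linear (for the right `A`-actions `n ◃ a = t a • n`). -/
def RightALin (lb : LeftBialgebroid k A U) {N M : Type}
    [AddCommGroup N] [Module k N] [Module U N]
    [AddCommGroup M] [Module k M] [Module U M]
    (g : N →ₗ[k] M) : Prop :=
  ∀ (a : A) (n : N), g (lb.t a • n) = lb.t a • g n

/-- `f` descends to `N ⊗_A P`. -/
def IsBalanced (lb : LeftBialgebroid k A U) {N P M : Type}
    [AddCommGroup N] [Module k N] [Module U N]
    [AddCommGroup P] [Module k P] [Module U P]
    [AddCommGroup M] [Module k M]
    (f : N ⊗[k] P →ₗ[k] M) : Prop :=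
  relA k A U lb.s lb.t N P ≤ LinearMap.ker f

/-- `f : N ⊗[k] P →ₗ[k] M` is equivariant for the diagonal (comultiplication)
`U`-action `u • (n ⊗ p) = u₍₁₎ n ⊗ u₍₂₎ p` on `N ⊗_A P` and the given `U`-action
on `M`. -/
def DiagEquiv (lb : LeftBialgebroid k A U) {N P M : Type}
    [AddCommGroup N] [Module k N] [Module U N]
    [AddCommGroup P] [Module k P] [Module U P]
    [AddCommGroup M] [Module k M] [Module U M]
    (f : N ⊗[k] P →ₗ[k] M) : Prop :=
  ∀ (u : U) (n : N) (p : P) {κ : Type} [Fintype κ] (x y : κ → U),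
    lb.comul u - ∑ j, x j ⊗ₜ[k] y j ∈ relA k A U lb.s lb.t U U →
      f (∑ j, (x j • n) ⊗ₜ[k] (y j • p)) = u • f (n ⊗ₜ[k] p)

set_option linter.unusedSectionVars false
set_option linter.unusedVariables false

namespace Stmt6Aux

variable {k A U : Type} [CommRing k] [Ring A] [Ring U] [Algebra k A] [Algebra k U]

lemma apply_span_le {V W : Type} [AddCommGroup V] [Module k V]
    [AddCommGroup W] [Module k W]
    (f : V →ₗ[k] W) {s : Set V} {T : Submodule k W}
    (h : ∀ z ∈ s, f z ∈ T) {z : V} (hz : z ∈ Submodule.span k s) : f z ∈ T :=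
  Submodule.span_le.2 (fun v hv => show v ∈ T.comap f from h v hv) hz

lemma relA_gen (s t : A → U) {N M : Type} [AddCommGroup N] [Module k N] [Module U N]
    [AddCommGroup M] [Module k M] [Module U M] (a : A) (n : N) (m : M) :
    (t a • n) ⊗ₜ[k] m - n ⊗ₜ[k] (s a • m) ∈ relA k A U s t N M :=
  Submodule.subset_span ⟨a, n, m, rfl⟩

lemma relOp_gen (t : A → U) (a : A) (u v : U) :
    (u * t a) ⊗ₜ[k] v - u ⊗ₜ[k] (t a * v) ∈ relOp k A U t :=
  Submodule.subset_span ⟨a, u, v, rfl⟩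

lemma relA_genU (s t : A → U) (a : A) (x y : U) :
    (t a * x) ⊗ₜ[k] y - x ⊗ₜ[k] (s a * y) ∈ relA k A U s t U U := by
  have := relA_gen (k := k) s t (N := U) (M := U) a x y
  simpa [smul_eq_mul] using this

/-! tensor-square operators -/

/-- `x ⊗ y ↦ x ⊗ (y * v)` -/
def rho (v : U) : U ⊗[k] U →ₗ[k] U ⊗[k] U :=
  TensorProduct.map LinearMap.id (LinearMap.mulRight k v)

/-- `x ⊗ y ↦ (t a * x) ⊗ y` -/
def lamT (lb : LeftBialgebroid k A U) (a : A) : U ⊗[k] U →ₗ[k] U ⊗[k] U :=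
  TensorProduct.map (LinearMap.mulLeft k (lb.t a)) LinearMap.id

/-- `x ⊗ y ↦ x ⊗ (t a * y)` -/
def muT (lb : LeftBialgebroid k A U) (a : A) : U ⊗[k] U →ₗ[k] U ⊗[k] U :=
  TensorProduct.map LinearMap.id (LinearMap.mulLeft k (lb.t a))

/-- `x ⊗ y ↦ (x * v) ⊗ y` -/
def rhoL (v : U) : U ⊗[k] U →ₗ[k] U ⊗[k] U :=
  TensorProduct.map (LinearMap.mulRight k v) LinearMap.id

@[simp] lemma rho_tmul (v x y : U) : rho (k := k) v (x ⊗ₜ[k] y) = x ⊗ₜ[k] (y * v) := rfl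
@[simp] lemma lamT_tmul (lb : LeftBialgebroid k A U) (a : A) (x y : U) :
    lamT lb a (x ⊗ₜ[k] y) = (lb.t a * x) ⊗ₜ[k] y := rfl
@[simp] lemma muT_tmul (lb : LeftBialgebroid k A U) (a : A) (x y : U) :
    muT lb a (x ⊗ₜ[k] y) = x ⊗ₜ[k] (lb.t a * y) := rfl
@[simp] lemma rhoL_tmul (v x y : U) : rhoL (k := k) v (x ⊗ₜ[k] y) = (x * v) ⊗ₜ[k] y := rfl

lemma rho_one : rho (k := k) (1 : U) = LinearMap.id := by
  ext x y
  simp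

lemma rho_rho (v w : U) (z : U ⊗[k] U) : rho v (rho w z) = rho (w * v) z := by
  induction z using TensorProduct.induction_on with
  | zero => simp
  | tmul x y => simp [mul_assoc]
  | add z1 z2 h1 h2 => simp [map_add, h1, h2]

lemma rho_add (v w : U) (z : U ⊗[k] U) : rho (v + w) z = rho v z + rho w z := by
  induction z using TensorProduct.induction_on with
  | zero => simp
  | tmul x y => simp [mul_add, TensorProduct.tmul_add]
  | add z1 z2 h1 h2 =>
      simp only [map_add, h1, h2]; abel

lemma rho_ksmul (c : k) (v : U) (z : U ⊗[k] U) : rho (c • v) z = c • rho v z := by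
  induction z using TensorProduct.induction_on with
  | zero => simp
  | tmul x y => simp [mul_smul_comm, TensorProduct.tmul_smul]
  | add z1 z2 h1 h2 => simp [map_add, h1, h2]

/-! preservation of the relation submodules -/

lemma rho_relA (lb : LeftBialgebroid k A U) (v : U) {z : U ⊗[k] U}
    (hz : z ∈ relA k A U lb.s lb.t U U) : rho v z ∈ relA k A U lb.s lb.t U U := by
  refine apply_span_le (rho v) (fun w hw => ?_) hz
  obtain ⟨a, x, y, rfl⟩ := hw
  have : rho v ((lb.t a • x) ⊗ₜ[k] y - x ⊗ₜ[k] (lb.s a • y)) =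
      (lb.t a • x) ⊗ₜ[k] (y * v) - x ⊗ₜ[k] (lb.s a • (y * v)) := by
    simp [map_sub, smul_eq_mul, mul_assoc]
  rw [this]
  exact relA_gen lb.s lb.t a x (y * v)

lemma rho_relOp (lb : LeftBialgebroid k A U) (v : U) {z : U ⊗[k] U}
    (hz : z ∈ relOp k A U lb.t) : rho v z ∈ relOp k A U lb.t := by
  refine apply_span_le (rho v) (fun w hw => ?_) hz
  obtain ⟨a, x, y, rfl⟩ := hw
  have : rho v ((x * lb.t a) ⊗ₜ[k] y - x ⊗ₜ[k] (lb.t a * y)) =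
      (x * lb.t a) ⊗ₜ[k] (y * v) - x ⊗ₜ[k] (lb.t a * (y * v)) := by
    simp [map_sub, mul_assoc]
  rw [this]
  exact relOp_gen lb.t a x (y * v)

lemma lamT_relOp (lb : LeftBialgebroid k A U) (a' : A) (v : U) {z : U ⊗[k] U}
    (hz : z ∈ relOp k A U lb.t) : lamT lb a' z ∈ relOp k A U lb.t := by
  refine apply_span_le (lamT lb a') (fun w hw => ?_) hz
  obtain ⟨a, x, y, rfl⟩ := hw
  have : lamT lb a' ((x * lb.t a) ⊗ₜ[k] y - x ⊗ₜ[k] (lb.t a * y)) =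
      ((lb.t a' * x) * lb.t a) ⊗ₜ[k] y - (lb.t a' * x) ⊗ₜ[k] (lb.t a * y) := by
    simp [map_sub, mul_assoc]
  rw [this]
  exact relOp_gen lb.t a (lb.t a' * x) y

lemma muT_relA (lb : LeftBialgebroid k A U) (a' : A) {z : U ⊗[k] U}
    (hz : z ∈ relA k A U lb.s lb.t U U) : muT lb a' z ∈ relA k A U lb.s lb.t U U := by
  refine apply_span_le (muT lb a') (fun w hw => ?_) hz
  obtain ⟨a, x, y, rfl⟩ := hw
  have : muT lb a' ((lb.t a • x) ⊗ₜ[k] y - x ⊗ₜ[k] (lb.s a • y)) =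
      (lb.t a • x) ⊗ₜ[k] (lb.t a' * y) - x ⊗ₜ[k] (lb.s a • (lb.t a' * y)) := by
    simp only [muT, map_sub, TensorProduct.map_tmul, LinearMap.id_apply,
      LinearMap.mulLeft_apply, smul_eq_mul]
    rw [← mul_assoc, ← lb.st_comm, mul_assoc]
  rw [this]
  exact relA_gen lb.s lb.t a x (lb.t a' * y)

lemma rhoL_relA (lb : LeftBialgebroid k A U) (v : U) {z : U ⊗[k] U}
    (hz : z ∈ relA k A U lb.s lb.t U U) : rhoL v z ∈ relA k A U lb.s lb.t U U := by
  refine apply_span_le (rhoL v) (fun w hw => ?_) hz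
  obtain ⟨a, x, y, rfl⟩ := hw
  have : rhoL v ((lb.t a • x) ⊗ₜ[k] y - x ⊗ₜ[k] (lb.s a • y)) =
      (lb.t a • (x * v)) ⊗ₜ[k] y - (x * v) ⊗ₜ[k] (lb.s a • y) := by
    simp [map_sub, smul_eq_mul, mul_assoc]
  rw [this]
  exact relA_gen lb.s lb.t a (x * v) y


lemma mul_one_tmul (w : U) (z : U ⊗[k] U) : z * ((1 : U) ⊗ₜ[k] w) = rho w z := by
  induction z using TensorProduct.induction_on with
  | zero => simp
  | tmul x y => simp [Algebra.TensorProduct.tmul_mul_tmul]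
  | add z1 z2 h1 h2 => simp [add_mul, h1, h2]

lemma mul_tmul_one (w : U) (z : U ⊗[k] U) : z * (w ⊗ₜ[k] (1 : U)) = rhoL w z := by
  induction z using TensorProduct.induction_on with
  | zero => simp
  | tmul x y => simp [Algebra.TensorProduct.tmul_mul_tmul]
  | add z1 z2 h1 h2 => simp [add_mul, h1, h2]

lemma one_tmul_mul (lb : LeftBialgebroid k A U) (a : A) (z : U ⊗[k] U) :
    ((1 : U) ⊗ₜ[k] lb.t a) * z = muT lb a z := by
  induction z using TensorProduct.induction_on with
  | zero => simp
  | tmul x y => simp [Algebra.TensorProduct.tmul_mul_tmul]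
  | add z1 z2 h1 h2 => simp [mul_add, h1, h2]

/-- right multiplication preserves `relA` -/
lemma mul_mem_relA (lb : LeftBialgebroid k A U) {z : U ⊗[k] U} (w : U ⊗[k] U)
    (hz : z ∈ relA k A U lb.s lb.t U U) : z * w ∈ relA k A U lb.s lb.t U U := by
  refine apply_span_le (LinearMap.mulRight k w) (fun g hg => ?_) hz
  obtain ⟨a, x, y, rfl⟩ := hg
  simp only [LinearMap.mulRight_apply]
  induction w using TensorProduct.induction_on with
  | zero => simpa using (Submodule.zero_mem _)
  | tmul p q =>
      have : ((lb.t a • x) ⊗ₜ[k] y - x ⊗ₜ[k] (lb.s a • y)) * (p ⊗ₜ[k] q) =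
          (lb.t a • (x * p)) ⊗ₜ[k] (y * q) - (x * p) ⊗ₜ[k] (lb.s a • (y * q)) := by
        simp [sub_mul, Algebra.TensorProduct.tmul_mul_tmul, smul_eq_mul, mul_assoc]
      rw [this]
      exact relA_gen lb.s lb.t a (x * p) (y * q)
  | add w1 w2 h1 h2 =>
      rw [mul_add]
      exact Submodule.add_mem _ h1 h2

/-- left multiplication by `comul u` preserves `relA` (Takeuchi). -/
lemma comul_mul_mem_relA (lb : LeftBialgebroid k A U) (u : U) {z : U ⊗[k] U}
    (hz : z ∈ relA k A U lb.s lb.t U U) :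
    lb.comul u * z ∈ relA k A U lb.s lb.t U U := by
  refine apply_span_le (LinearMap.mulLeft k (lb.comul u)) (fun g hg => ?_) hz
  obtain ⟨a, x, y, rfl⟩ := hg
  simp only [LinearMap.mulLeft_apply]
  have e1 : (lb.t a • x) ⊗ₜ[k] y = (lb.t a ⊗ₜ[k] (1 : U)) * (x ⊗ₜ[k] y) := by
    simp [Algebra.TensorProduct.tmul_mul_tmul, smul_eq_mul]
  have e2 : x ⊗ₜ[k] (lb.s a • y) = ((1 : U) ⊗ₜ[k] lb.s a) * (x ⊗ₜ[k] y) := by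
    simp [Algebra.TensorProduct.tmul_mul_tmul, smul_eq_mul]
  have : lb.comul u * ((lb.t a • x) ⊗ₜ[k] y - x ⊗ₜ[k] (lb.s a • y)) =
      (lb.comul u * (lb.t a ⊗ₜ[k] (1 : U)) - lb.comul u * ((1 : U) ⊗ₜ[k] lb.s a)) *
        (x ⊗ₜ[k] y) := by
    rw [e1, e2, mul_sub, sub_mul, mul_assoc, mul_assoc]
  rw [this]
  refine mul_mem_relA lb _ ?_
  have h1 : lb.comul u * (lb.t a ⊗ₜ[k] (1 : U)) =
      TensorProduct.map (LinearMap.mulRight k (lb.t a)) LinearMap.id (lb.comul u) := by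
    rw [mul_tmul_one]; rfl
  have h2 : lb.comul u * ((1 : U) ⊗ₜ[k] lb.s a) =
      TensorProduct.map LinearMap.id (LinearMap.mulRight k (lb.s a)) (lb.comul u) := by
    rw [mul_one_tmul]; rfl
  rw [h1, h2]
  exact lb.takeuchi u a

/-- `Δ(u t(a)) ≡ Δ(u)(1 ⊗ t(a))` -/
lemma comul_mul_t (lb : LeftBialgebroid k A U) (u : U) (a : A) :
    lb.comul (u * lb.t a) - rho (lb.t a) (lb.comul u) ∈ relA k A U lb.s lb.t U U := by
  have h1 := lb.comul_mul u (lb.t a)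
  have h2 : lb.comul u * (lb.comul (lb.t a) - (1 : U) ⊗ₜ[k] lb.t a)
      ∈ relA k A U lb.s lb.t U U := comul_mul_mem_relA lb u (lb.comul_t a)
  have e : lb.comul (u * lb.t a) - rho (lb.t a) (lb.comul u) =
      (lb.comul (u * lb.t a) - lb.comul u * lb.comul (lb.t a)) +
        lb.comul u * (lb.comul (lb.t a) - (1 : U) ⊗ₜ[k] lb.t a) := by
    rw [mul_sub, mul_one_tmul]; abel
  rw [e]
  exact Submodule.add_mem _ h1 h2

/-- `Δ(t(a) u) ≡ (1 ⊗ t(a))Δ(u)` -/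
lemma comul_t_mul (lb : LeftBialgebroid k A U) (u : U) (a : A) :
    lb.comul (lb.t a * u) - muT lb a (lb.comul u) ∈ relA k A U lb.s lb.t U U := by
  have h1 := lb.comul_mul (lb.t a) u
  have h2 : (lb.comul (lb.t a) - (1 : U) ⊗ₜ[k] lb.t a) * lb.comul u
      ∈ relA k A U lb.s lb.t U U := mul_mem_relA lb _ (lb.comul_t a)
  have e : lb.comul (lb.t a * u) - muT lb a (lb.comul u) =
      (lb.comul (lb.t a * u) - lb.comul (lb.t a) * lb.comul u) +
        (lb.comul (lb.t a) - (1 : U) ⊗ₜ[k] lb.t a) * lb.comul u := by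
    rw [sub_mul, one_tmul_mul]; abel
  rw [e]
  exact Submodule.add_mem _ h1 h2
/-! quotient maps -/

section Quot

variable (lb : LeftBialgebroid k A U)

/-- the map `α'(u ⊗ v) = Δ(u)(1 ⊗ v)` into `U ⊗_A U` -/
def alpha' : U ⊗[k] U →ₗ[k] (U ⊗[k] U ⧸ relA k A U lb.s lb.t U U) :=
  TensorProduct.lift <| LinearMap.mk₂ k
    (fun u v => (relA k A U lb.s lb.t U U).mkQ (rho v (lb.comul u)))
    (fun u u' v => by
      rw [← map_add, Submodule.mkQ_apply, Submodule.mkQ_apply, Submodule.Quotient.eq]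
      have := rho_relA lb v (lb.comul_add u u')
      simpa [map_sub, sub_sub] using this)
    (fun c u v => by
      rw [← map_smul, Submodule.mkQ_apply, Submodule.mkQ_apply, Submodule.Quotient.eq]
      have := rho_relA lb v (lb.comul_ksmul c u)
      simpa [map_sub, map_smul] using this)
    (fun u v v' => by rw [rho_add, map_add])
    (fun c u v => by rw [rho_ksmul, map_smul])

/-- the map `Θ(u ⊗ v) = u₊ ⊗ u₋ v` into `U ⊗_{Aᵒᵖ} U` -/
def Theta (lh : LeftHopf k A U lb) : U ⊗[k] U →ₗ[k] (U ⊗[k] U ⧸ relOp k A U lb.t) :=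
  TensorProduct.lift <| LinearMap.mk₂ k
    (fun u v => (relOp k A U lb.t).mkQ (rho v (lh.pinv u)))
    (fun u u' v => by
      rw [← map_add, Submodule.mkQ_apply, Submodule.mkQ_apply, Submodule.Quotient.eq]
      have := rho_relOp lb v (lh.pinv_add u u')
      simpa [map_sub, sub_sub] using this)
    (fun c u v => by
      rw [← map_smul, Submodule.mkQ_apply, Submodule.mkQ_apply, Submodule.Quotient.eq]
      have := rho_relOp lb v (lh.pinv_ksmul c u)
      simpa [map_sub, map_smul] using this)
    (fun u v v' => by rw [rho_add, map_add])
    (fun c u v => by rw [rho_ksmul, map_smul])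

@[simp] lemma alpha'_tmul (u v : U) :
    alpha' lb (u ⊗ₜ[k] v) = (relA k A U lb.s lb.t U U).mkQ (rho v (lb.comul u)) := rfl

@[simp] lemma Theta_tmul (lh : LeftHopf k A U lb) (u v : U) :
    Theta lb lh (u ⊗ₜ[k] v) = (relOp k A U lb.t).mkQ (rho v (lh.pinv u)) := rfl

/-- `1 ⊗ (– v)` on `U ⊗_A U` -/
def rhoQA (v : U) : (U ⊗[k] U ⧸ relA k A U lb.s lb.t U U) →ₗ[k]
    (U ⊗[k] U ⧸ relA k A U lb.s lb.t U U) :=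
  Submodule.mapQ _ _ (rho v) (fun _ hz => rho_relA lb v hz)

def rhoQOp (v : U) : (U ⊗[k] U ⧸ relOp k A U lb.t) →ₗ[k] (U ⊗[k] U ⧸ relOp k A U lb.t) :=
  Submodule.mapQ _ _ (rho v) (fun _ hz => rho_relOp lb v hz)

def muQA (a : A) : (U ⊗[k] U ⧸ relA k A U lb.s lb.t U U) →ₗ[k]
    (U ⊗[k] U ⧸ relA k A U lb.s lb.t U U) :=
  Submodule.mapQ _ _ (muT lb a) (fun _ hz => muT_relA lb a hz)

def rhoLQA (v : U) : (U ⊗[k] U ⧸ relA k A U lb.s lb.t U U) →ₗ[k]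
    (U ⊗[k] U ⧸ relA k A U lb.s lb.t U U) :=
  Submodule.mapQ _ _ (rhoL v) (fun _ hz => rhoL_relA lb v hz)

@[simp] lemma rhoQA_mk (v : U) (z : U ⊗[k] U) :
    rhoQA lb v ((relA k A U lb.s lb.t U U).mkQ z) = (relA k A U lb.s lb.t U U).mkQ (rho v z) :=
  Submodule.mapQ_apply _ _ _ z
@[simp] lemma rhoQOp_mk (v : U) (z : U ⊗[k] U) :
    rhoQOp lb v ((relOp k A U lb.t).mkQ z) = (relOp k A U lb.t).mkQ (rho v z) :=
  Submodule.mapQ_apply _ _ _ z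
@[simp] lemma muQA_mk (a : A) (z : U ⊗[k] U) :
    muQA lb a ((relA k A U lb.s lb.t U U).mkQ z) = (relA k A U lb.s lb.t U U).mkQ (muT lb a z) :=
  Submodule.mapQ_apply _ _ _ z
@[simp] lemma rhoLQA_mk (v : U) (z : U ⊗[k] U) :
    rhoLQA lb v ((relA k A U lb.s lb.t U U).mkQ z) = (relA k A U lb.s lb.t U U).mkQ (rhoL v z) :=
  Submodule.mapQ_apply _ _ _ z

lemma rho_muT (v : U) (a : A) (z : U ⊗[k] U) : rho v (muT lb a z) = muT lb a (rho v z) := by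
  induction z using TensorProduct.induction_on with
  | zero => simp
  | tmul x y => simp [mul_assoc]
  | add z1 z2 h1 h2 => simp [map_add, h1, h2]

lemma rho_rhoL (v w : U) (z : U ⊗[k] U) : rho v (rhoL w z) = rhoL w (rho v z) := by
  induction z using TensorProduct.induction_on with
  | zero => simp
  | tmul x y => simp
  | add z1 z2 h1 h2 => simp [map_add, h1, h2]

lemma alpha'_rho (v : U) (z : U ⊗[k] U) :
    alpha' lb (rho v z) = rhoQA lb v (alpha' lb z) := by
  induction z using TensorProduct.induction_on with
  | zero => simp
  | tmul x y => rw [rho_tmul, alpha'_tmul, alpha'_tmul, rhoQA_mk, rho_rho]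
  | add z1 z2 h1 h2 => simp [map_add, h1, h2]

lemma Theta_rho (lh : LeftHopf k A U lb) (v : U) (z : U ⊗[k] U) :
    Theta lb lh (rho v z) = rhoQOp lb v (Theta lb lh z) := by
  induction z using TensorProduct.induction_on with
  | zero => simp
  | tmul x y => rw [rho_tmul, Theta_tmul, Theta_tmul, rhoQOp_mk, rho_rho]
  | add z1 z2 h1 h2 => simp [map_add, h1, h2]

lemma alpha'_lamT (a : A) (z : U ⊗[k] U) :
    alpha' lb (lamT lb a z) = muQA lb a (alpha' lb z) := by
  induction z using TensorProduct.induction_on with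
  | zero => simp
  | tmul x y =>
      rw [lamT_tmul, alpha'_tmul, alpha'_tmul, muQA_mk]
      rw [Submodule.mkQ_apply, Submodule.mkQ_apply, Submodule.Quotient.eq]
      have e : rho y (lb.comul (lb.t a * x)) - muT lb a (rho y (lb.comul x)) =
          rho y (lb.comul (lb.t a * x) - muT lb a (lb.comul x)) := by
        rw [map_sub, rho_muT]
      rw [e]
      exact rho_relA lb y (comul_t_mul lb x a)
  | add z1 z2 h1 h2 => simp [map_add, h1, h2]

end Quot

/-- uniform finite decomposition of a finite family of tensors -/
lemma exists_uniform_rep {κ : Type} [Fintype κ] (z : κ → U ⊗[k] U) :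
    ∃ (T : Finset (U × U)) (p q : κ → T → U),
      ∀ j, z j = ∑ l : T, p j l ⊗ₜ[k] q j l := by
  classical
  choose S hS using fun j => TensorProduct.exists_finset (z j)
  refine ⟨Finset.univ.biUnion S,
    fun j l => if (l : U × U) ∈ S j then (l : U × U).1 else 0,
    fun j l => if (l : U × U) ∈ S j then (l : U × U).2 else 0, fun j => ?_⟩
  rw [hS j]
  rw [Finset.sum_coe_sort (Finset.univ.biUnion S)
    (fun l => (if l ∈ S j then l.1 else 0) ⊗ₜ[k] (if l ∈ S j then l.2 else 0))]
  have e : ∀ l ∈ Finset.univ.biUnion S,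
      (if l ∈ S j then l.1 else 0) ⊗ₜ[k] (if l ∈ S j then l.2 else 0) =
        if l ∈ S j then l.1 ⊗ₜ[k] l.2 else 0 := by
    intro l _
    split_ifs <;> simp
  rw [Finset.sum_congr rfl e, Finset.sum_ite_mem,
    Finset.inter_eq_right.mpr (Finset.subset_biUnion_of_mem S (Finset.mem_univ j))]
lemma mul_rho (w : U) (z z' : U ⊗[k] U) : rho w (z * z') = z * rho w z' := by
  rw [← mul_one_tmul, ← mul_one_tmul, mul_assoc]

section Facts

variable (lb : LeftBialgebroid k A U) (lh : LeftHopf k A U lb)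

/-- `α_ℓ(u₊ ⊗ u₋) = u ⊗ 1` in `U ⊗_A U`, for any representative. -/
lemma F1gen (u : U) (V : U ⊗[k] U) (hV : lh.pinv u - V ∈ relOp k A U lb.t) :
    alpha' lb V = (relA k A U lb.s lb.t U U).mkQ (u ⊗ₜ[k] (1 : U)) := by
  classical
  obtain ⟨T0, hT0⟩ := TensorProduct.exists_finset V
  have hV' : V = ∑ i : T0, (i : U × U).1 ⊗ₜ[k] (i : U × U).2 := by
    rw [hT0, Finset.sum_coe_sort T0 (fun i => i.1 ⊗ₜ[k] i.2)]
  obtain ⟨T, p, q, hpq⟩ := exists_uniform_rep (fun i : T0 => lb.comul (i : U × U).1)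
  have h2 : ∀ j : T0, lb.comul (j : U × U).1 - ∑ l : T, p j l ⊗ₜ[k] q j l
      ∈ relA k A U lb.s lb.t U U := fun j => by
    rw [hpq j, sub_self]; exact Submodule.zero_mem _
  have h1 : lh.pinv u - ∑ i : T0, (i : U × U).1 ⊗ₜ[k] (i : U × U).2 ∈ relOp k A U lb.t := by
    rw [← hV']; exact hV
  have key := lh.sch2 u (fun i : T0 => (i : U × U).1) (fun i => (i : U × U).2) p q h1 h2
  have step : ∀ j : T0, alpha' lb ((j : U × U).1 ⊗ₜ[k] (j : U × U).2) =
      (relA k A U lb.s lb.t U U).mkQ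
        (∑ l : T, p j l ⊗ₜ[k] (q j l * (j : U × U).2)) := fun j => by
    rw [alpha'_tmul, hpq j, map_sum]; simp only [rho_tmul]
  have e : alpha' lb V =
      (relA k A U lb.s lb.t U U).mkQ
        (∑ j : T0, ∑ l : T, p j l ⊗ₜ[k] (q j l * (j : U × U).2)) := by
    calc alpha' lb V = ∑ j : T0, alpha' lb ((j : U × U).1 ⊗ₜ[k] (j : U × U).2) := by
          rw [hV']; exact map_sum (alpha' lb) _ Finset.univ
      _ = ∑ j : T0, (relA k A U lb.s lb.t U U).mkQ
            (∑ l : T, p j l ⊗ₜ[k] (q j l * (j : U × U).2)) :=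
          Finset.sum_congr rfl (fun j _ => step j)
      _ = _ := (map_sum ((relA k A U lb.s lb.t U U).mkQ) _ Finset.univ).symm
  rw [e, Submodule.mkQ_apply, Submodule.mkQ_apply, Submodule.Quotient.eq]
  exact key

/-- `β(Δ(u)) = u ⊗ 1` in `U ⊗_{Aᵒᵖ} U`, for any representative. -/
lemma F2gen (u : U) (W : U ⊗[k] U) (hW : lb.comul u - W ∈ relA k A U lb.s lb.t U U) :
    Theta lb lh W = (relOp k A U lb.t).mkQ (u ⊗ₜ[k] (1 : U)) := by
  classical
  obtain ⟨T0, hT0⟩ := TensorProduct.exists_finset W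
  have hW' : W = ∑ i : T0, (i : U × U).1 ⊗ₜ[k] (i : U × U).2 := by
    rw [hT0, Finset.sum_coe_sort T0 (fun i => i.1 ⊗ₜ[k] i.2)]
  obtain ⟨T, p, q, hpq⟩ := exists_uniform_rep (fun i : T0 => lh.pinv (i : U × U).1)
  have h2 : ∀ j : T0, lh.pinv (j : U × U).1 - ∑ l : T, p j l ⊗ₜ[k] q j l
      ∈ relOp k A U lb.t := fun j => by
    rw [hpq j, sub_self]; exact Submodule.zero_mem _
  have h1 : lb.comul u - ∑ i : T0, (i : U × U).1 ⊗ₜ[k] (i : U × U).2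
      ∈ relA k A U lb.s lb.t U U := by
    rw [← hW']; exact hW
  have key := lh.sch3 u (fun i : T0 => (i : U × U).1) (fun i => (i : U × U).2) p q h1 h2
  have step : ∀ j : T0, Theta lb lh ((j : U × U).1 ⊗ₜ[k] (j : U × U).2) =
      (relOp k A U lb.t).mkQ
        (∑ l : T, p j l ⊗ₜ[k] (q j l * (j : U × U).2)) := fun j => by
    rw [Theta_tmul, hpq j, map_sum]; simp only [rho_tmul]
  have e : Theta lb lh W =
      (relOp k A U lb.t).mkQ
        (∑ j : T0, ∑ l : T, p j l ⊗ₜ[k] (q j l * (j : U × U).2)) := by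
    calc Theta lb lh W = ∑ j : T0, Theta lb lh ((j : U × U).1 ⊗ₜ[k] (j : U × U).2) := by
          rw [hW']; exact map_sum (Theta lb lh) _ Finset.univ
      _ = ∑ j : T0, (relOp k A U lb.t).mkQ
            (∑ l : T, p j l ⊗ₜ[k] (q j l * (j : U × U).2)) :=
          Finset.sum_congr rfl (fun j _ => step j)
      _ = _ := (map_sum ((relOp k A U lb.t).mkQ) _ Finset.univ).symm
  rw [e, Submodule.mkQ_apply, Submodule.mkQ_apply, Submodule.Quotient.eq]
  exact key

/-- `β` kills the relations of `U ⊗_A U`. -/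
lemma Theta_relA {r : U ⊗[k] U} (hr : r ∈ relA k A U lb.s lb.t U U) :
    Theta lb lh r = 0 := by
  have h1 := F2gen lb lh 1 (lb.comul 1) (by rw [sub_self]; exact Submodule.zero_mem _)
  have h2 := F2gen lb lh 1 (lb.comul 1 + r)
    (by simpa [sub_add_eq_sub_sub, sub_self, zero_sub] using Submodule.neg_mem _ hr)
  rw [map_add, h1] at h2
  simpa using h2

include lh in
/-- `α'` kills the relations of `U ⊗_{Aᵒᵖ} U`. -/
lemma alpha'_relOp {r : U ⊗[k] U} (hr : r ∈ relOp k A U lb.t) :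
    alpha' lb r = 0 := by
  have h1 := F1gen lb lh 1 (lh.pinv 1) (by rw [sub_self]; exact Submodule.zero_mem _)
  have h2 := F1gen lb lh 1 (lh.pinv 1 + r)
    (by simpa [sub_add_eq_sub_sub, sub_self, zero_sub] using Submodule.neg_mem _ hr)
  rw [map_add, h1] at h2
  simpa using h2

include lh in
/-- injectivity of the Hopf–Galois map -/
lemma mem_relOp_of_alpha' {z : U ⊗[k] U} (hz : alpha' lb z = 0) :
    z ∈ relOp k A U lb.t := by
  classical
  obtain ⟨S, hS⟩ := TensorProduct.exists_finset z
  have hwA : (∑ i ∈ S, rho i.2 (lb.comul i.1)) ∈ relA k A U lb.s lb.t U U := by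
    rw [← Submodule.Quotient.mk_eq_zero, ← Submodule.mkQ_apply, map_sum]
    have : (∑ i ∈ S, (relA k A U lb.s lb.t U U).mkQ (rho i.2 (lb.comul i.1)))
        = alpha' lb z := by
      rw [hS, map_sum]
      exact Finset.sum_congr rfl (fun i _ => (alpha'_tmul lb i.1 i.2).symm)
    rw [this, hz]
  have hTz : (relOp k A U lb.t).mkQ z = Theta lb lh (∑ i ∈ S, rho i.2 (lb.comul i.1)) := by
    rw [hS, map_sum, map_sum]
    refine Finset.sum_congr rfl (fun i _ => ?_)
    rw [Theta_rho lb lh,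
      F2gen lb lh i.1 (lb.comul i.1) (by rw [sub_self]; exact Submodule.zero_mem _),
      rhoQOp_mk]
    simp
  rw [← Submodule.Quotient.mk_eq_zero, ← Submodule.mkQ_apply, hTz]
  exact Theta_relA lb lh hwA

/-- `1₊ ⊗ 1₋ = 1 ⊗ 1` -/
lemma P_unit : lh.pinv 1 - (1 : U) ⊗ₜ[k] (1 : U) ∈ relOp k A U lb.t := by
  refine mem_relOp_of_alpha' lb lh ?_
  rw [map_sub, F1gen lb lh 1 (lh.pinv 1) (by rw [sub_self]; exact Submodule.zero_mem _)]
  rw [alpha'_tmul, rho_one, LinearMap.id_apply, sub_eq_zero,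
    Submodule.mkQ_apply, Submodule.mkQ_apply, Submodule.Quotient.eq]
  have := Submodule.neg_mem _ lb.comul_one
  simpa using this

/-- `t(a)₊ ⊗ t(a)₋ = 1 ⊗ s(a)` -/
lemma P_t (a : A) : lh.pinv (lb.t a) - (1 : U) ⊗ₜ[k] (lb.s a) ∈ relOp k A U lb.t := by
  refine mem_relOp_of_alpha' lb lh ?_
  rw [map_sub, F1gen lb lh (lb.t a) (lh.pinv (lb.t a))
    (by rw [sub_self]; exact Submodule.zero_mem _)]
  rw [alpha'_tmul, sub_eq_zero, Submodule.mkQ_apply, Submodule.mkQ_apply,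
    Submodule.Quotient.eq]
  have h1 : lb.t a ⊗ₜ[k] (1 : U) - (1 : U) ⊗ₜ[k] lb.s a ∈ relA k A U lb.s lb.t U U := by
    have := relA_genU (k := k) lb.s lb.t a 1 1
    simpa using this
  have h2 : (1 : U) ⊗ₜ[k] lb.s a - rho (lb.s a) (lb.comul 1) ∈ relA k A U lb.s lb.t U U := by
    have := rho_relA lb (lb.s a) (Submodule.neg_mem _ lb.comul_one)
    simpa [map_sub, map_neg, neg_sub, one_mul] using this
  have := Submodule.add_mem _ h1 h2
  simpa using this

/-- `t(a)u₊ ⊗ u₋ = u₊ ⊗ u₋t(a)` in `U ⊗_{Aᵒᵖ} U` -/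
lemma P_iv (a : A) (u : U) :
    rho (lb.t a) (lh.pinv u) - lamT lb a (lh.pinv u) ∈ relOp k A U lb.t := by
  refine mem_relOp_of_alpha' lb lh ?_
  rw [map_sub, alpha'_rho, alpha'_lamT,
    F1gen lb lh u (lh.pinv u) (by rw [sub_self]; exact Submodule.zero_mem _),
    rhoQA_mk, muQA_mk, sub_eq_zero]
  simp

end Facts
section Pmul

variable (lb : LeftBialgebroid k A U) (lh : LeftHopf k A U lb)

/-- `(uv)₊ ⊗ (uv)₋ = u₊v₊ ⊗ v₋u₋` in `U ⊗_{Aᵒᵖ} U` -/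
lemma P_mul (u v : U) {κ : Type} [Fintype κ] (x y : κ → U)
    {κ' : Type} [Fintype κ'] (p q : κ' → U)
    (hx : lh.pinv u - ∑ j, x j ⊗ₜ[k] y j ∈ relOp k A U lb.t)
    (hp : lh.pinv v - ∑ l, p l ⊗ₜ[k] q l ∈ relOp k A U lb.t) :
    lh.pinv (u * v) - ∑ j, ∑ l, (x j * p l) ⊗ₜ[k] (q l * y j) ∈ relOp k A U lb.t := by
  have hWv : (∑ l, rho (q l) (lb.comul (p l))) - v ⊗ₜ[k] (1 : U)
      ∈ relA k A U lb.s lb.t U U := by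
    rw [← Submodule.Quotient.eq]
    rw [← Submodule.mkQ_apply, ← Submodule.mkQ_apply, map_sum]
    have e1 : (∑ l, (relA k A U lb.s lb.t U U).mkQ (rho (q l) (lb.comul (p l))))
        = alpha' lb (∑ l, p l ⊗ₜ[k] q l) := by
      rw [map_sum]
      exact Finset.sum_congr rfl (fun l _ => (alpha'_tmul lb (p l) (q l)).symm)
    rw [e1, F1gen lb lh v _ hp, Submodule.mkQ_apply]
  have step2 : ∀ (j : κ) (l : κ'),
      (relA k A U lb.s lb.t U U).mkQ (rho (q l * y j) (lb.comul (x j * p l))) =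
        (relA k A U lb.s lb.t U U).mkQ
          (rho (y j) (lb.comul (x j) * rho (q l) (lb.comul (p l)))) := by
    intro j l
    rw [Submodule.mkQ_apply, Submodule.mkQ_apply, Submodule.Quotient.eq]
    have e : rho (q l * y j) (lb.comul (x j * p l)) -
        rho (y j) (lb.comul (x j) * rho (q l) (lb.comul (p l))) =
        rho (y j) (rho (q l) (lb.comul (x j * p l) - lb.comul (x j) * lb.comul (p l))) := by
      rw [map_sub, map_sub, rho_rho,
        mul_rho (q l) (lb.comul (x j)) (lb.comul (p l))]
    rw [e]
    exact rho_relA lb _ (rho_relA lb _ (lb.comul_mul (x j) (p l)))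
  have step5 : ∀ j : κ,
      (relA k A U lb.s lb.t U U).mkQ
          (rho (y j) (lb.comul (x j) * (∑ l, rho (q l) (lb.comul (p l))))) =
        (relA k A U lb.s lb.t U U).mkQ (rho (y j) (rhoL v (lb.comul (x j)))) := by
    intro j
    rw [Submodule.mkQ_apply, Submodule.mkQ_apply, Submodule.Quotient.eq]
    have e : rho (y j) (lb.comul (x j) * (∑ l, rho (q l) (lb.comul (p l)))) -
        rho (y j) (rhoL v (lb.comul (x j))) =
        rho (y j) (lb.comul (x j) * ((∑ l, rho (q l) (lb.comul (p l))) - v ⊗ₜ[k] (1 : U))) := by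
      rw [mul_sub, map_sub, mul_tmul_one]
    rw [e]
    exact rho_relA lb _ (comul_mul_mem_relA lb _ hWv)
  have main : alpha' lb (∑ j, ∑ l, (x j * p l) ⊗ₜ[k] (q l * y j)) =
      (relA k A U lb.s lb.t U U).mkQ ((u * v) ⊗ₜ[k] (1 : U)) := by
    calc alpha' lb (∑ j, ∑ l, (x j * p l) ⊗ₜ[k] (q l * y j))
        = ∑ j, ∑ l, (relA k A U lb.s lb.t U U).mkQ
            (rho (q l * y j) (lb.comul (x j * p l))) := by
          rw [map_sum]
          refine Finset.sum_congr rfl (fun j _ => ?_)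
          rw [map_sum]
          exact Finset.sum_congr rfl (fun l _ => alpha'_tmul lb _ _)
      _ = ∑ j, ∑ l, (relA k A U lb.s lb.t U U).mkQ
            (rho (y j) (lb.comul (x j) * rho (q l) (lb.comul (p l)))) :=
          Finset.sum_congr rfl (fun j _ => Finset.sum_congr rfl (fun l _ => step2 j l))
      _ = ∑ j, (relA k A U lb.s lb.t U U).mkQ
            (rho (y j) (lb.comul (x j) * (∑ l, rho (q l) (lb.comul (p l))))) := by
          refine Finset.sum_congr rfl (fun j _ => ?_)
          rw [Finset.mul_sum, map_sum, map_sum]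
      _ = ∑ j, (relA k A U lb.s lb.t U U).mkQ (rho (y j) (rhoL v (lb.comul (x j)))) :=
          Finset.sum_congr rfl (fun j _ => step5 j)
      _ = ∑ j, rhoLQA lb v ((relA k A U lb.s lb.t U U).mkQ (rho (y j) (lb.comul (x j)))) := by
          refine Finset.sum_congr rfl (fun j _ => ?_)
          rw [rhoLQA_mk, rho_rhoL]
      _ = rhoLQA lb v (∑ j, (relA k A U lb.s lb.t U U).mkQ (rho (y j) (lb.comul (x j)))) :=
          (map_sum _ _ _).symm
      _ = rhoLQA lb v (alpha' lb (∑ j, x j ⊗ₜ[k] y j)) := by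
          congr 1
          rw [map_sum]
          exact Finset.sum_congr rfl (fun j _ => (alpha'_tmul lb (x j) (y j)).symm)
      _ = rhoLQA lb v ((relA k A U lb.s lb.t U U).mkQ (u ⊗ₜ[k] (1 : U))) := by
          rw [F1gen lb lh u _ hx]
      _ = (relA k A U lb.s lb.t U U).mkQ ((u * v) ⊗ₜ[k] (1 : U)) := by
          rw [rhoLQA_mk, rhoL_tmul]
  refine mem_relOp_of_alpha' lb lh ?_
  rw [map_sub, main, F1gen lb lh (u * v) _ (by rw [sub_self]; exact Submodule.zero_mem _),
    sub_self]

end Pmul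
section Modules

variable {N M : Type}
  [AddCommGroup N] [Module k N] [Module U N] [IsScalarTower k U N]
  [AddCommGroup M] [Module k M] [Module U M] [IsScalarTower k U M]

lemma smul_comm_kU (c : k) (u : U) (n : N) : u • (c • n) = c • (u • n) := by
  rw [← algebraMap_smul U c n, ← mul_smul, ← Algebra.commutes, mul_smul, algebraMap_smul]

/-- `n ↦ u • n` as a `k`-linear map -/
def actLin (u : U) : N →ₗ[k] N where
  toFun n := u • n
  map_add' := smul_add u
  map_smul' c n := smul_comm_kU c u n

@[simp] lemma actLin_apply (u : U) (n : N) : actLin (k := k) u n = u • n := rfl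

/-- `Φ(g)(x ⊗ y) = x • g (y • –)` -/
def Phi (g : N →ₗ[k] M) : U ⊗[k] U →ₗ[k] (N →ₗ[k] M) :=
  TensorProduct.lift <| LinearMap.mk₂ k
    (fun x y => actLin x ∘ₗ g ∘ₗ actLin y)
    (fun x x' y => by ext n; simp [add_smul])
    (fun c x y => by ext n; simp [smul_assoc])
    (fun x y y' => by ext n; simp [add_smul])
    (fun c x y => by ext n; simp [smul_assoc, smul_comm_kU])

@[simp] lemma Phi_tmul (g : N →ₗ[k] M) (x y : U) (n : N) :
    Phi g (x ⊗ₜ[k] y) n = x • g (y • n) := rfl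

lemma Phi_relOp (lb : LeftBialgebroid k A U) {g : N →ₗ[k] M} (hg : RightALin lb g)
    {z : U ⊗[k] U} (hz : z ∈ relOp k A U lb.t) : Phi g z = 0 := by
  have : Phi g z ∈ (⊥ : Submodule k (N →ₗ[k] M)) := by
    refine apply_span_le (Phi g) (fun w hw => ?_) hz
    obtain ⟨a, u, v, rfl⟩ := hw
    rw [Submodule.mem_bot, map_sub]
    ext n
    simp only [LinearMap.sub_apply, Phi_tmul, LinearMap.zero_apply]
    rw [mul_smul (lb.t a) v n, hg a (v • n), ← mul_smul, sub_self]
  simpa using this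

lemma Phi_rho_apply (g : N →ₗ[k] M) (v : U) (z : U ⊗[k] U) (n : N) :
    Phi g (rho v z) n = Phi g z (v • n) := by
  induction z using TensorProduct.induction_on with
  | zero => simp
  | tmul x y => simp [mul_smul]
  | add z1 z2 h1 h2 => simp [map_add, LinearMap.add_apply, h1, h2]

lemma Phi_lamT_apply (lb : LeftBialgebroid k A U) (g : N →ₗ[k] M) (a : A)
    (z : U ⊗[k] U) (n : N) :
    Phi g (lamT lb a z) n = lb.t a • (Phi g z n) := by
  induction z using TensorProduct.induction_on with
  | zero => simp
  | tmul x y => simp [mul_smul]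
  | add z1 z2 h1 h2 => simp [map_add, LinearMap.add_apply, h1, h2, smul_add]

lemma Phi_sum_apply (g : N →ₗ[k] M) {κ : Type} [Fintype κ] (x y : κ → U) (n : N) :
    Phi g (∑ j, x j ⊗ₜ[k] y j) n = ∑ j, x j • g (y j • n) := by
  rw [map_sum]
  simp

lemma Phi_add_g (g g' : N →ₗ[k] M) (z : U ⊗[k] U) :
    Phi (g + g') z = Phi g z + Phi g' z := by
  induction z using TensorProduct.induction_on with
  | zero => simp
  | tmul x y => ext n; simp [smul_add]
  | add z1 z2 h1 h2 =>
      simp only [map_add, h1, h2]; abel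

lemma Phi_smul_g (c : k) (g : N →ₗ[k] M) (z : U ⊗[k] U) :
    Phi (c • g) z = c • Phi g z := by
  induction z using TensorProduct.induction_on with
  | zero => simp
  | tmul x y => ext n; simp [smul_comm_kU]
  | add z1 z2 h1 h2 => simp [map_add, h1, h2]

variable (lb : LeftBialgebroid k A U) (lh : LeftHopf k A U lb)

lemma pm_congr {g : N →ₗ[k] M} (hg : RightALin lb g) {z z' : U ⊗[k] U}
    (h : z - z' ∈ relOp k A U lb.t) : Phi g z = Phi g z' := by
  have h0 := Phi_relOp lb hg h
  rw [map_sub, sub_eq_zero] at h0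
  exact h0

/-- the characterizing formula for the action `pm` -/
lemma pm_char {g : N →ₗ[k] M} (hg : RightALin lb g) (u : U)
    {κ : Type} [Fintype κ] (x y : κ → U)
    (h : lh.pinv u - ∑ j, x j ⊗ₜ[k] y j ∈ relOp k A U lb.t) (n : N) :
    Phi g (lh.pinv u) n = ∑ j, x j • g (y j • n) := by
  rw [pm_congr lb hg h, Phi_sum_apply]

lemma pm_rightALin {g : N →ₗ[k] M} (hg : RightALin lb g) (u : U) :
    RightALin lb (Phi g (lh.pinv u)) := by
  intro a n
  rw [← Phi_rho_apply, pm_congr lb hg (P_iv lb lh a u), Phi_lamT_apply]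

lemma pm_one {g : N →ₗ[k] M} (hg : RightALin lb g) : Phi g (lh.pinv 1) = g := by
  rw [pm_congr lb hg (P_unit lb lh)]
  ext n
  simp

lemma pm_mul {g : N →ₗ[k] M} (hg : RightALin lb g) (u v : U) :
    Phi g (lh.pinv (u * v)) = Phi (Phi g (lh.pinv v)) (lh.pinv u) := by
  classical
  obtain ⟨Sx, hSx⟩ := TensorProduct.exists_finset (lh.pinv u)
  have hxu : lh.pinv u = ∑ i : Sx, (i : U × U).1 ⊗ₜ[k] (i : U × U).2 := by
    rw [hSx, Finset.sum_coe_sort Sx (fun i => i.1 ⊗ₜ[k] i.2)]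
  obtain ⟨Sp, hSp⟩ := TensorProduct.exists_finset (lh.pinv v)
  have hpv : lh.pinv v = ∑ l : Sp, (l : U × U).1 ⊗ₜ[k] (l : U × U).2 := by
    rw [hSp, Finset.sum_coe_sort Sp (fun i => i.1 ⊗ₜ[k] i.2)]
  have key := P_mul lb lh u v (fun i : Sx => (i : U × U).1) (fun i : Sx => (i : U × U).2)
    (fun l : Sp => (l : U × U).1) (fun l : Sp => (l : U × U).2)
    (by rw [← hxu, sub_self]; exact Submodule.zero_mem _)
    (by rw [← hpv, sub_self]; exact Submodule.zero_mem _)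
  ext n
  rw [pm_congr lb hg key]
  simp only [map_sum, LinearMap.sum_apply]
  have inner : ∀ j : Sx,
      (∑ l : Sp, Phi g (((j : U × U).1 * (l : U × U).1) ⊗ₜ[k]
          ((l : U × U).2 * (j : U × U).2)) n)
        = (j : U × U).1 • (Phi g (lh.pinv v) ((j : U × U).2 • n)) := by
    intro j
    rw [hpv, map_sum]
    simp only [LinearMap.sum_apply, Finset.smul_sum]
    refine Finset.sum_congr rfl (fun l _ => ?_)
    rw [Phi_tmul, Phi_tmul, mul_smul, mul_smul]
  calc (∑ j : Sx, ∑ l : Sp, Phi g (((j : U × U).1 * (l : U × U).1) ⊗ₜ[k]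
          ((l : U × U).2 * (j : U × U).2)) n)
      = ∑ j : Sx, (j : U × U).1 • (Phi g (lh.pinv v) ((j : U × U).2 • n)) := by
        refine Finset.sum_congr rfl (fun j _ => ?_)
        rw [← inner j]
    _ = Phi (Phi g (lh.pinv v)) (lh.pinv u) n := by
        conv_rhs => rw [hxu]
        rw [Phi_sum_apply]

lemma pm_add_u {g : N →ₗ[k] M} (hg : RightALin lb g) (u v : U) :
    Phi g (lh.pinv (u + v)) = Phi g (lh.pinv u) + Phi g (lh.pinv v) := by
  have h0 := Phi_relOp lb hg (lh.pinv_add u v)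
  rw [map_sub, map_sub, sub_sub, sub_eq_zero] at h0
  exact h0

lemma pm_smul_u {g : N →ₗ[k] M} (hg : RightALin lb g) (c : k) (u : U) :
    Phi g (lh.pinv (c • u)) = c • Phi g (lh.pinv u) := by
  have h0 := Phi_relOp lb hg (lh.pinv_ksmul c u)
  rw [map_sub, sub_eq_zero] at h0
  rw [h0, map_smul]

end Modules
section Xi

variable {P N M : Type}
  [AddCommGroup P] [Module k P] [Module U P] [IsScalarTower k U P]
  [AddCommGroup N] [Module k N] [Module U N] [IsScalarTower k U N]
  [AddCommGroup M] [Module k M] [Module U M] [IsScalarTower k U M]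

/-- `Ξ(f,p,n)(z ⊗ w) = f((z•p) ⊗ (w•n))` -/
def Xi (f : P ⊗[k] N →ₗ[k] M) (p : P) (n : N) : U ⊗[k] U →ₗ[k] M :=
  TensorProduct.lift <| LinearMap.mk₂ k
    (fun z w => f ((z • p) ⊗ₜ[k] (w • n)))
    (fun z z' w => by rw [add_smul, TensorProduct.add_tmul, map_add])
    (fun c z w => by rw [smul_assoc, ← TensorProduct.smul_tmul', map_smul])
    (fun z w w' => by rw [add_smul, TensorProduct.tmul_add, map_add])
    (fun c z w => by rw [smul_assoc, TensorProduct.tmul_smul, map_smul])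

@[simp] lemma Xi_tmul (f : P ⊗[k] N →ₗ[k] M) (p : P) (n : N) (z w : U) :
    Xi f p n (z ⊗ₜ[k] w) = f ((z • p) ⊗ₜ[k] (w • n)) := rfl

lemma Xi_relA (lb : LeftBialgebroid k A U) {f : P ⊗[k] N →ₗ[k] M}
    (hf : IsBalanced lb f) (p : P) (n : N) {z : U ⊗[k] U}
    (hz : z ∈ relA k A U lb.s lb.t U U) : Xi f p n z = 0 := by
  have : Xi f p n z ∈ (⊥ : Submodule k M) := by
    refine apply_span_le (Xi f p n) (fun w hw => ?_) hz
    obtain ⟨a, z', w', rfl⟩ := hw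
    rw [Submodule.mem_bot, map_sub, Xi_tmul, Xi_tmul]
    have e1 : (lb.t a • z') • p = lb.t a • (z' • p) := by
      rw [smul_eq_mul, mul_smul]
    have e2 : (lb.s a • w') • n = lb.s a • (w' • n) := by
      rw [smul_eq_mul, mul_smul]
    rw [e1, e2, sub_eq_zero]
    have hmem : (lb.t a • (z' • p)) ⊗ₜ[k] (w' • n) - (z' • p) ⊗ₜ[k] (lb.s a • (w' • n))
        ∈ relA k A U lb.s lb.t P N := relA_gen lb.s lb.t a (z' • p) (w' • n)
    have := hf hmem
    rw [LinearMap.mem_ker, map_sub, sub_eq_zero] at this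
    exact this
  simpa using this

variable (lb : LeftBialgebroid k A U) (lh : LeftHopf k A U lb)

/-- Theta-level version of sch3. -/
lemma sum_rho_pinv (u : U) {κ : Type} [Fintype κ] (x y : κ → U)
    (hdec : lb.comul u - ∑ j, x j ⊗ₜ[k] y j ∈ relA k A U lb.s lb.t U U) :
    (∑ j, rho (y j) (lh.pinv (x j))) - u ⊗ₜ[k] (1 : U) ∈ relOp k A U lb.t := by
  have e1 : (relOp k A U lb.t).mkQ (∑ j, rho (y j) (lh.pinv (x j))) =
      Theta lb lh (∑ j, x j ⊗ₜ[k] y j) := by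
    rw [map_sum, map_sum]
    exact Finset.sum_congr rfl (fun j _ => (Theta_tmul lb lh (x j) (y j)).symm)
  have e2 : Theta lb lh (∑ j, x j ⊗ₜ[k] y j) = (relOp k A U lb.t).mkQ (u ⊗ₜ[k] 1) := by
    have e3 : Theta lb lh (∑ j, x j ⊗ₜ[k] y j) =
        Theta lb lh (lb.comul u) - Theta lb lh (lb.comul u - ∑ j, x j ⊗ₜ[k] y j) := by
      rw [map_sub]; abel
    rw [e3, Theta_relA lb lh hdec, sub_zero,
      F2gen lb lh u _ (by rw [sub_self]; exact Submodule.zero_mem _)]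
  have := e1.trans e2
  rw [Submodule.mkQ_apply, Submodule.mkQ_apply, Submodule.Quotient.eq] at this
  exact this

/-- the `U`-equivariance of `ξ(f)`. -/
lemma xi_equivariant {f : P ⊗[k] N →ₗ[k] M} (hbal : IsBalanced lb f)
    (heq : DiagEquiv lb f) (u : U) (p : P) :
    f ∘ₗ TensorProduct.mk k P N (u • p) =
      Phi (f ∘ₗ TensorProduct.mk k P N p) (lh.pinv u) := by
  classical
  ext n
  obtain ⟨S, hS⟩ := TensorProduct.exists_finset (lh.pinv u)
  have hxu : lh.pinv u = ∑ i : S, (i : U × U).1 ⊗ₜ[k] (i : U × U).2 := by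
    rw [hS, Finset.sum_coe_sort S (fun i => i.1 ⊗ₜ[k] i.2)]
  obtain ⟨T, p', q', hpq⟩ := exists_uniform_rep (fun i : S => lb.comul (i : U × U).1)
  have key := lh.sch2 u (fun i : S => (i : U × U).1) (fun i => (i : U × U).2) p' q'
    (by rw [← hxu, sub_self]; exact Submodule.zero_mem _)
    (fun j => by rw [hpq j, sub_self]; exact Submodule.zero_mem _)
  have lhs : f ((u • p) ⊗ₜ[k] n) = Xi f p n (u ⊗ₜ[k] (1 : U)) := by
    rw [Xi_tmul, one_smul]
  have rhs : Phi (f ∘ₗ TensorProduct.mk k P N p) (lh.pinv u) n =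
      Xi f p n (∑ j : S, ∑ l : T, p' j l ⊗ₜ[k] (q' j l * (j : U × U).2)) := by
    conv_lhs => rw [hxu]
    rw [Phi_sum_apply, map_sum (Xi f p n) _ Finset.univ]
    refine Finset.sum_congr rfl (fun j _ => ?_)
    have hj := heq ((j : U × U).1) p (((j : U × U).2) • n)
      (fun l : T => p' j l) (fun l : T => q' j l)
      (by rw [hpq j, sub_self]; exact Submodule.zero_mem _)
    rw [LinearMap.comp_apply, TensorProduct.mk_apply, ← hj,
      map_sum f _ Finset.univ, map_sum (Xi f p n) _ Finset.univ]
    refine Finset.sum_congr rfl (fun l _ => ?_)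
    rw [Xi_tmul, mul_smul]
  have diff : Xi f p n (∑ j : S, ∑ l : T, p' j l ⊗ₜ[k] (q' j l * (j : U × U).2)) =
      Xi f p n (u ⊗ₜ[k] (1 : U)) := by
    have h0 := Xi_relA lb hbal p n key
    rw [map_sub, sub_eq_zero] at h0
    exact h0
  simp only [LinearMap.comp_apply, TensorProduct.mk_apply]
  rw [lhs, rhs, diff]

end Xi
end Stmt6Aux

open Stmt6Aux in
/-- for a left bialgebroid `(U, A)` which is left Hopf, the monoidal
category of left `U`-modules is right closed: `hom^r(N,M) = Hom_{Aᵒᵖ}(N,M)` (the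
right `A`-linear maps) carries a left `U`-action `(u · g)(n) = u₊ g(u₋ n)`, and
the Hom-tensor adjunction `ξ : Hom_U(P ⊗_A N, M) ≅ Hom_U(P, hom^r(N,M))`,
`ξ(f)(p) = f(p ⊗ -)`, is a natural bijection.  Consequently, `U`-Mod is
biclosed monoidal (together with the left internal Homs of Statement 5). -/
theorem stmt_6 (lb : LeftBialgebroid k A U) (lh : LeftHopf k A U lb)
    (N M P P' M' : Type)
    [AddCommGroup N] [Module k N] [Module U N] [IsScalarTower k U N]
    [AddCommGroup M] [Module k M] [Module U M] [IsScalarTower k U M]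
    [AddCommGroup P] [Module k P] [Module U P] [IsScalarTower k U P]
    [AddCommGroup P'] [Module k P'] [Module U P'] [IsScalarTower k U P']
    [AddCommGroup M'] [Module k M'] [Module U M'] [IsScalarTower k U M'] :
    -- there is a left U-action `pm` on Hom_{Aᵒᵖ}(N, M) — `(u · g)(n) = u₊ g(u₋ n)`
    ∃ pm : U → (N →ₗ[k] M) → (N →ₗ[k] M),
      -- characterizing formula, via arbitrary finite decompositions of u₊ ⊗ u₋
      (∀ (u : U) (g : N →ₗ[k] M), RightALin lb g →
        ∀ {κ : Type} [Fintype κ] (x y : κ → U),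
          lh.pinv u - ∑ j, x j ⊗ₜ[k] y j ∈ relOp k A U lb.t →
            ∀ n : N, pm u g n = ∑ j, x j • g (y j • n)) ∧
      -- it preserves right A-linearity
      (∀ (u : U) (g : N →ₗ[k] M), RightALin lb g → RightALin lb (pm u g)) ∧
      -- and is a (k-compatible) left U-module structure on Hom_{Aᵒᵖ}(N, M)
      (∀ g : N →ₗ[k] M, RightALin lb g → pm (1 : U) g = g) ∧
      (∀ (u v : U) (g : N →ₗ[k] M), RightALin lb g →
        pm (u * v) g = pm u (pm v g)) ∧
      (∀ (u v : U) (g : N →ₗ[k] M), RightALin lb g →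
        pm (u + v) g = pm u g + pm v g) ∧
      (∀ (u : U) (g g' : N →ₗ[k] M), RightALin lb g → RightALin lb g' →
        pm u (g + g') = pm u g + pm u g') ∧
      (∀ (c : k) (u : U) (g : N →ₗ[k] M), RightALin lb g →
        pm (c • u) g = c • pm u g) ∧
      (∀ (c : k) (u : U) (g : N →ₗ[k] M), RightALin lb g →
        pm u (c • g) = c • pm u g) ∧
      -- the Hom-tensor adjunction ξ : Hom_U(P ⊗_A N, M) ≅ Hom_U(P, hom^r(N,M)),
      -- ξ(f)(p) := f(p ⊗ -), is well defined, U-linear, bijective and natural: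
      -- well-definedness
      (∀ f : P ⊗[k] N →ₗ[k] M, IsBalanced lb f → DiagEquiv lb f →
        ∀ p : P, RightALin lb (f ∘ₗ TensorProduct.mk k P N p)) ∧
      -- additivity, k-linearity and U-equivariance of p ↦ ξ(f)(p)
      (∀ (f : P ⊗[k] N →ₗ[k] M) (p p' : P),
        f ∘ₗ TensorProduct.mk k P N (p + p') =
          f ∘ₗ TensorProduct.mk k P N p + f ∘ₗ TensorProduct.mk k P N p') ∧
      (∀ (f : P ⊗[k] N →ₗ[k] M) (c : k) (p : P),
        f ∘ₗ TensorProduct.mk k P N (c • p) = c • (f ∘ₗ TensorProduct.mk k P N p)) ∧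
      (∀ f : P ⊗[k] N →ₗ[k] M, IsBalanced lb f → DiagEquiv lb f →
        ∀ (u : U) (p : P),
          f ∘ₗ TensorProduct.mk k P N (u • p) = pm u (f ∘ₗ TensorProduct.mk k P N p)) ∧
      -- injectivity
      (∀ f g : P ⊗[k] N →ₗ[k] M, IsBalanced lb f → DiagEquiv lb f →
        IsBalanced lb g → DiagEquiv lb g →
        (∀ p : P, f ∘ₗ TensorProduct.mk k P N p = g ∘ₗ TensorProduct.mk k P N p) →
        f = g) ∧
      -- surjectivity
      (∀ G : P → (N →ₗ[k] M),
        (∀ p, RightALin lb (G p)) →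
        (∀ p p', G (p + p') = G p + G p') →
        (∀ (c : k) (p : P), G (c • p) = c • G p) →
        (∀ (u : U) (p : P), G (u • p) = pm u (G p)) →
        ∃ f : P ⊗[k] N →ₗ[k] M, IsBalanced lb f ∧ DiagEquiv lb f ∧
          ∀ p, f ∘ₗ TensorProduct.mk k P N p = G p) ∧
      -- naturality in P
      (∀ (σ : P' →ₗ[k] P), (∀ (u : U) (p' : P'), σ (u • p') = u • σ p') →
        ∀ (f : P ⊗[k] N →ₗ[k] M) (p' : P'),
          (f ∘ₗ TensorProduct.map σ (LinearMap.id : N →ₗ[k] N)) ∘ₗ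
              TensorProduct.mk k P' N p' =
            f ∘ₗ TensorProduct.mk k P N (σ p')) ∧
      -- naturality in M
      (∀ (ω : M →ₗ[k] M'), (∀ (u : U) (m : M), ω (u • m) = u • ω m) →
        ∀ (f : P ⊗[k] N →ₗ[k] M) (p : P),
          (ω ∘ₗ f) ∘ₗ TensorProduct.mk k P N p = ω ∘ₗ (f ∘ₗ TensorProduct.mk k P N p)) ∧
      -- consequently, together with the left internal Homs of Statement 5
      -- (the adjunction ζ : Hom_U(N ⊗_A P, M) ≅ Hom_U(P, Hom_U(N ⊗_A U, M))),
      -- the category of left U-modules is biclosed monoidal: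
      (∀ f : N ⊗[k] P →ₗ[k] M, IsBalanced lb f → DiagEquiv lb f → ∀ p : P,
        IsBalanced lb (f ∘ₗ TensorProduct.map (LinearMap.id : N →ₗ[k] N)
          (actOn P p : U →ₗ[k] P)) ∧
        DiagEquiv lb (f ∘ₗ TensorProduct.map (LinearMap.id : N →ₗ[k] N)
          (actOn P p : U →ₗ[k] P))) ∧
      (∀ f g : N ⊗[k] P →ₗ[k] M, IsBalanced lb f → DiagEquiv lb f →
        IsBalanced lb g → DiagEquiv lb g →
        (∀ p : P, f ∘ₗ TensorProduct.map (LinearMap.id : N →ₗ[k] N)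
            (actOn P p : U →ₗ[k] P) =
          g ∘ₗ TensorProduct.map (LinearMap.id : N →ₗ[k] N)
            (actOn P p : U →ₗ[k] P)) → f = g) ∧
      (∀ G : P → (N ⊗[k] U →ₗ[k] M),
        (∀ p, IsBalanced lb (G p) ∧ DiagEquiv lb (G p)) →
        (∀ p p', G (p + p') = G p + G p') →
        (∀ (c : k) (p : P), G (c • p) = c • G p) →
        (∀ (u : U) (p : P), G (u • p) =
          (G p) ∘ₗ TensorProduct.map (LinearMap.id : N →ₗ[k] N)
            (LinearMap.mulRight k u)) →
        ∃ f : N ⊗[k] P →ₗ[k] M, IsBalanced lb f ∧ DiagEquiv lb f ∧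
          ∀ p, f ∘ₗ TensorProduct.map (LinearMap.id : N →ₗ[k] N)
            (actOn P p : U →ₗ[k] P) = G p) := by

  classical
  refine ⟨fun u g => Phi g (lh.pinv u), ?_, ?_, ?_, ?_, ?_, ?_, ?_, ?_, ?_, ?_, ?_,
    ?_, ?_, ?_, ?_, ?_, ?_, ?_, ?_⟩
  · -- characterizing formula
    intro u g hg κ _ x y h n
    exact pm_char lb lh hg u x y h n
  · -- preserves right A-linearity
    intro u g hg
    exact pm_rightALin lb lh hg u
  · -- unitality
    intro g hg
    exact pm_one lb lh hg
  · -- multiplicativity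
    intro u v g hg
    exact pm_mul lb lh hg u v
  · -- additivity in u
    intro u v g hg
    exact pm_add_u lb lh hg u v
  · -- additivity in g
    intro u g g' _ _
    exact Phi_add_g g g' (lh.pinv u)
  · -- k-linearity in u
    intro c u g hg
    exact pm_smul_u lb lh hg c u
  · -- k-linearity in g
    intro c u g _
    exact Phi_smul_g c g (lh.pinv u)
  · -- well-definedness of ξ
    intro f hbal heq p a n
    have h := heq (lb.t a) p n (fun _ : Fin 1 => (1 : U)) (fun _ => lb.t a)
      (by rw [Fin.sum_univ_one]; exact lb.comul_t a)
    rw [Fin.sum_univ_one, one_smul] at h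
    simpa using h
  · -- additivity of ξ(f) in p
    intro f p p'
    ext n
    simp [TensorProduct.add_tmul]
  · -- k-linearity of ξ(f) in p
    intro f c p
    ext n
    simp only [LinearMap.comp_apply, TensorProduct.mk_apply, LinearMap.smul_apply]
    rw [← TensorProduct.smul_tmul', map_smul]
  · -- U-equivariance of ξ(f)
    intro f hbal heq u p
    exact xi_equivariant lb lh hbal heq u p
  · -- injectivity of ξ
    intro f g _ _ _ _ h
    refine TensorProduct.ext' (fun p n => ?_)
    have := LinearMap.congr_fun (h p) n
    simpa using this
  · -- surjectivity of ξ
    intro G hA hadd hsmul hequiv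
    have hBsmul : ∀ (c : k) (p : P), G (c • p) = (RingHom.id k) c • G p := by
      intro c p; rw [hsmul]; rfl
    set f₀ : P ⊗[k] N →ₗ[k] M :=
      TensorProduct.lift { toFun := G, map_add' := hadd, map_smul' := hBsmul } with hf₀
    have f₀_tmul : ∀ (p : P) (n : N), f₀ (p ⊗ₜ[k] n) = G p n := fun p n => rfl
    refine ⟨f₀, ?_, ?_, fun p => by ext n; rfl⟩
    · -- balanced
      intro z hz
      rw [LinearMap.mem_ker]
      have : f₀ z ∈ (⊥ : Submodule k M) := by
        refine apply_span_le _ (fun w hw => ?_) hz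
        obtain ⟨a, p, n, rfl⟩ := hw
        rw [Submodule.mem_bot, map_sub, f₀_tmul, f₀_tmul, hequiv (lb.t a) p]
        show Phi (G p) (lh.pinv (lb.t a)) n - G p (lb.s a • n) = 0
        rw [pm_congr lb (hA p) (P_t lb lh a), Phi_tmul, one_smul, sub_self]
      simpa using this
    · -- diagonally equivariant
      intro u p n κ _ x y hdec
      have e0 : ∀ j : κ, f₀ ((x j • p) ⊗ₜ[k] (y j • n)) =
          Phi (G p) (rho (y j) (lh.pinv (x j))) n := by
        intro j
        rw [f₀_tmul, hequiv (x j) p]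
        show Phi (G p) (lh.pinv (x j)) (y j • n) = _
        rw [Phi_rho_apply]
      rw [map_sum, Finset.sum_congr rfl (fun j _ => e0 j), ← LinearMap.sum_apply,
        ← map_sum, pm_congr lb (hA p) (sum_rho_pinv lb lh u x y hdec), Phi_tmul, one_smul]
      rfl
  · -- naturality in P
    intro σ _ f p'
    ext n
    simp
  · -- naturality in M
    intro ω _ f p
    ext n
    simp
  · -- statement 5: currying is well defined
    intro f hbal heq p
    constructor
    · intro z hz
      rw [LinearMap.mem_ker]
      have : (f ∘ₗ TensorProduct.map LinearMap.id (actOn P p)) z ∈ (⊥ : Submodule k M) := by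
        refine apply_span_le _ (fun w hw => ?_) hz
        obtain ⟨a, n, w, rfl⟩ := hw
        rw [Submodule.mem_bot, map_sub, LinearMap.comp_apply, LinearMap.comp_apply,
          TensorProduct.map_tmul, TensorProduct.map_tmul]
        have e1 : (lb.s a • w) = lb.s a * w := rfl
        have e2 : actOn (k := k) P p (lb.s a • w) = lb.s a • (w • p) := by
          rw [show actOn (k := k) P p (lb.s a • w) = (lb.s a • w) • p from rfl, e1, mul_smul]
        rw [e2, show actOn (k := k) P p w = w • p from rfl, sub_eq_zero]
        have hmem : (lb.t a • n) ⊗ₜ[k] (w • p) - n ⊗ₜ[k] (lb.s a • (w • p))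
            ∈ relA k A U lb.s lb.t N P := relA_gen lb.s lb.t a n (w • p)
        have := hbal hmem
        rw [LinearMap.mem_ker, map_sub, sub_eq_zero] at this
        exact this
      simpa using this
    · intro u n w κ _ x y hdec
      have e : ∀ j : κ, (f ∘ₗ TensorProduct.map LinearMap.id (actOn P p))
          ((x j • n) ⊗ₜ[k] (y j • w)) = f ((x j • n) ⊗ₜ[k] (y j • (w • p))) := by
        intro j
        rw [LinearMap.comp_apply, TensorProduct.map_tmul, LinearMap.id_apply]
        congr 1
        rw [show actOn (k := k) P p (y j • w) = (y j • w) • p from rfl, smul_eq_mul, mul_smul]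
      rw [map_sum, Finset.sum_congr rfl (fun j _ => e j), ← map_sum,
        heq u n (w • p) x y hdec]
      rfl
  · -- statement 5: injectivity
    intro f g _ _ _ _ h
    refine TensorProduct.ext' (fun n p => ?_)
    have h1 := LinearMap.congr_fun (h p) (n ⊗ₜ[k] (1 : U))
    simp only [LinearMap.comp_apply, TensorProduct.map_tmul, LinearMap.id_apply] at h1
    rw [show actOn (k := k) P p (1 : U) = (1 : U) • p from rfl, one_smul] at h1
    exact h1
  · -- statement 5: surjectivity
    intro G hGbd hadd hsmul hmulr
    set f₀ : N ⊗[k] P →ₗ[k] M :=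
      TensorProduct.lift (LinearMap.mk₂ k (fun n p => G p (n ⊗ₜ[k] (1 : U)))
        (fun n n' p => by rw [TensorProduct.add_tmul, map_add])
        (fun c n p => by rw [← TensorProduct.smul_tmul', map_smul])
        (fun n p p' => by rw [hadd, LinearMap.add_apply])
        (fun c n p => by rw [hsmul, LinearMap.smul_apply])) with hf₀
    have f₀_tmul : ∀ (n : N) (p : P), f₀ (n ⊗ₜ[k] p) = G p (n ⊗ₜ[k] (1 : U)) :=
      fun n p => rfl
    refine ⟨f₀, ?_, ?_, ?_⟩
    · -- balanced
      intro z hz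
      rw [LinearMap.mem_ker]
      have : f₀ z ∈ (⊥ : Submodule k M) := by
        refine apply_span_le _ (fun w hw => ?_) hz
        obtain ⟨a, n, p, rfl⟩ := hw
        rw [Submodule.mem_bot, map_sub, f₀_tmul, f₀_tmul,
          hmulr (lb.s a) p, LinearMap.comp_apply, TensorProduct.map_tmul,
          LinearMap.id_apply, LinearMap.mulRight_apply, one_mul]
        have hmem : (lb.t a • n) ⊗ₜ[k] (1 : U) - n ⊗ₜ[k] (lb.s a • (1 : U))
            ∈ relA k A U lb.s lb.t N U := relA_gen lb.s lb.t a n (1 : U)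
        have h0 := (hGbd p).1 hmem
        rw [LinearMap.mem_ker, map_sub, sub_eq_zero] at h0
        rw [show lb.s a • (1 : U) = lb.s a from by rw [smul_eq_mul, mul_one]] at h0
        rw [h0, sub_self]
      simpa using this
    · -- diagonally equivariant
      intro u n p κ _ x y hdec
      have e0 : ∀ j : κ, f₀ ((x j • n) ⊗ₜ[k] (y j • p)) =
          G p ((x j • n) ⊗ₜ[k] (y j • (1 : U))) := by
        intro j
        rw [f₀_tmul, hmulr (y j) p, LinearMap.comp_apply, TensorProduct.map_tmul,
          LinearMap.id_apply, LinearMap.mulRight_apply, one_mul, smul_eq_mul, mul_one]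
      rw [map_sum, Finset.sum_congr rfl (fun j _ => e0 j), ← map_sum,
        (hGbd p).2 u n (1 : U) x y hdec]
      rfl
    · -- composite
      intro p
      refine TensorProduct.ext' (fun n w => ?_)
      rw [LinearMap.comp_apply, TensorProduct.map_tmul, LinearMap.id_apply]
      have e1 : actOn (k := k) P p w = w • p := rfl
      rw [e1, f₀_tmul, hmulr w p, LinearMap.comp_apply, TensorProduct.map_tmul,
        LinearMap.id_apply, LinearMap.mulRight_apply, one_mul]

end
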